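/- Let $a<b$ and let $g:[a,b]\to\mathbb{R}$ be continuous with $g(t)>0$ for all $t$. If $w:[a,b]\to\mathbb{R}$ is continuous and is a viscosity subsolution of $|w'|=g$ on $(a,b)$, then for all $s,t\in[a,b]$ one has $|w(t)-w(s)|\le\left|\int_s^t g(r)\,dr\right|$; in particular $w$ is Lipschitz continuous on $[a,b]$ with Lipschitz constant $\max_{[a,b]}g$. -/

import Mathlib

/-- `w` is a viscosity subsolution of `|w'| = g` on `(a,b)`. -/
def ViscositySubsolution (a b : ℝ) (g w : ℝ → ℝ) : Prop :=
  ∀ t0 ∈ Set.Ioo a b, ∀ φ : ℝ → ℝ, Differentiable ℝ φ →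
    IsLocalMax (fun t => w t - φ t) t0 → |deriv φ t0| ≤ g t0

open Set Filter Topology intervalIntegral

/-- Core comparison: for `t < b`, with an `ε` margin. -/
lemma visc_core (a b : ℝ) (hab : a < b) (g w : ℝ → ℝ)
    (hg : ContinuousOn g (Set.Icc a b)) (hgpos : ∀ t ∈ Set.Icc a b, 0 < g t)
    (hw : ContinuousOn w (Set.Icc a b))
    (hsub : ViscositySubsolution a b g w)
    (ε : ℝ) (hε : 0 < ε) (s t : ℝ) (has : a ≤ s) (hst : s ≤ t) (htb : t < b) :
    w t - w s ≤ (∫ r in s..t, g r) + ε * (t - s) := by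
  -- clamped extension of g
  set c : ℝ → ℝ := fun r => max a (min b r) with hc
  have hcl : Continuous c := by fun_prop
  have hmem : ∀ r, c r ∈ Icc a b := fun r =>
    ⟨le_max_left _ _, max_le hab.le (min_le_left _ _)⟩
  set G' : ℝ → ℝ := fun r => g (c r) with hG'
  have hgt : Continuous G' := hg.comp_continuous hcl hmem
  have geq : ∀ r ∈ Icc a b, G' r = g r := by
    intro r hr
    simp only [hG', hc]
    rw [min_eq_right hr.2, max_eq_right hr.1]
  have gtpos : ∀ r, 0 < G' r := fun r => hgpos _ (hmem r)
  -- primitive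
  set G : ℝ → ℝ := fun r => ∫ x in a..r, (G' x + ε) with hGdef
  have hGd : ∀ r, HasDerivAt G (G' r + ε) r := fun r =>
    ((hgt.add continuous_const).integral_hasStrictDerivAt a r).hasDerivAt
  have hGc : Continuous G := by
    rw [continuous_iff_continuousAt]; exact fun r => (hGd r).continuousAt
  -- penalty
  set pen : ℝ → ℝ := fun r => ∫ x in t..r, max (x - t) 0 with hpendef
  have hmc : Continuous (fun x : ℝ => max (x - t) 0) := by fun_prop
  have hpd : ∀ r, HasDerivAt pen (max (r - t) 0) r := fun r =>
    (hmc.integral_hasStrictDerivAt t r).hasDerivAt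
  have hpc : Continuous pen := by
    rw [continuous_iff_continuousAt]; exact fun r => (hpd r).continuousAt
  have hpen0 : ∀ r, r ≤ t → pen r = 0 := by
    intro r hr
    have : EqOn (fun x : ℝ => max (x - t) 0) (fun _ => (0 : ℝ)) (uIcc t r) := by
      intro x hx
      rw [uIcc_of_ge hr] at hx
      exact max_eq_right (by linarith [hx.2])
    simp only [hpendef]
    rw [intervalIntegral.integral_congr this, intervalIntegral.integral_zero]
  -- auxiliary point u
  set u : ℝ := (t + b) / 2 with hu
  have htu : t < u := by simp only [hu]; linarith
  have hub : u < b := by simp only [hu]; linarith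
  have hsu : s ≤ u := hst.trans htu.le
  -- value of pen at u
  have hpenu : pen u = (u - t) ^ 2 / 2 := by
    have heq : EqOn (fun x : ℝ => max (x - t) 0) (fun x => x - t) (uIcc t u) := by
      intro x hx
      rw [uIcc_of_le htu.le] at hx
      exact max_eq_left (by linarith [hx.1])
    simp only [hpendef]
    rw [intervalIntegral.integral_congr heq,
      intervalIntegral.integral_sub intervalIntegrable_id (intervalIntegrable_const),
      integral_id, intervalIntegral.integral_const, smul_eq_mul]
    ring
  have hPpos : 0 < pen u := by
    rw [hpenu]; have h0 : 0 < u - t := by linarith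
    positivity
  -- constant K
  set K : ℝ := max 0 ((w u - G u - (w s - G s)) / pen u) + 1 with hK
  have hK0 : 0 < K := by positivity
  have hKP : w u - G u - K * pen u < w s - G s := by
    have h1 : (w u - G u - (w s - G s)) / pen u < K := by
      simp only [hK]; have := le_max_right 0 ((w u - G u - (w s - G s)) / pen u); linarith
    have := (div_lt_iff₀ hPpos).mp h1
    linarith
  -- test function
  set φ : ℝ → ℝ := fun r => G r + K * pen r with hφ
  have hφd : Differentiable ℝ φ := fun r =>
    ((hGd r).add ((hpd r).const_mul K)).differentiableAt
  have hφderiv : ∀ r, deriv φ r = G' r + ε + K * max (r - t) 0 := fun r =>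
    ((hGd r).add ((hpd r).const_mul K)).deriv
  -- maximize w - φ on [s, u]
  set h : ℝ → ℝ := fun r => w r - φ r with hh
  have hIccsub : Icc s u ⊆ Icc a b := Icc_subset_Icc has hub.le
  have hhc : ContinuousOn h (Icc s u) :=
    (hw.mono hIccsub).sub ((hGc.add (continuous_const.mul hpc)).continuousOn)
  obtain ⟨r0, hr0mem, hr0max⟩ :=
    isCompact_Icc.exists_isMaxOn (nonempty_Icc.mpr hsu) hhc
  have key : h t ≤ h s := by
    rcases eq_or_lt_of_le hr0mem.1 with he | hsr0
    · -- r0 = s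
      have h1 : h t ≤ h r0 := hr0max (mem_Icc.mpr ⟨hst, htu.le⟩)
      rw [← he] at h1
      exact h1
    rcases eq_or_lt_of_le hr0mem.2 with he | hr0u
    · -- r0 = u : contradiction
      exfalso
      have h1 : h s ≤ h r0 := hr0max (mem_Icc.mpr ⟨le_refl s, hsu⟩)
      rw [he] at h1
      have h2 : h s = w s - G s := by
        simp only [hh, hφ, hpen0 s hst, mul_zero, add_zero]
      have h3 : h u = w u - G u - K * pen u := by
        simp only [hh, hφ]; ring
      rw [h2, h3] at h1
      linarith
    · -- interior: contradiction with viscosity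
      exfalso
      have hr0ab : r0 ∈ Ioo a b := ⟨lt_of_le_of_lt has hsr0, hr0u.trans hub⟩
      have hloc : IsLocalMax h r0 :=
        hr0max.isLocalMax (Icc_mem_nhds hsr0 hr0u)
      have hv := hsub r0 hr0ab φ hφd hloc
      have h1 : deriv φ r0 = G' r0 + ε + K * max (r0 - t) 0 := hφderiv r0
      have h2 : G' r0 = g r0 := geq r0 ⟨hr0ab.1.le, hr0ab.2.le⟩
      have h3 : 0 ≤ K * max (r0 - t) 0 := mul_nonneg hK0.le (le_max_right _ _)
      have h4 : deriv φ r0 ≤ |deriv φ r0| := le_abs_self _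
      rw [h1, h2] at h4 hv
      linarith
  -- unpack
  have hGint : IntervalIntegrable (fun x => G' x + ε) MeasureTheory.volume s t :=
    (hgt.add continuous_const).intervalIntegrable s t
  have hGst : G t - G s = ∫ x in s..t, (G' x + ε) :=
    intervalIntegral.integral_interval_sub_left
      ((hgt.add continuous_const).intervalIntegrable a t)
      ((hgt.add continuous_const).intervalIntegrable a s)
  have hsplit : (∫ x in s..t, (G' x + ε)) = (∫ x in s..t, g x) + ε * (t - s) := by
    rw [intervalIntegral.integral_add (hgt.intervalIntegrable s t)
      (intervalIntegrable_const), intervalIntegral.integral_const]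
    have hcg : (∫ x in s..t, G' x) = ∫ x in s..t, g x := by
      apply intervalIntegral.integral_congr
      intro x hx
      rw [uIcc_of_le hst] at hx
      exact geq x ⟨has.trans hx.1, hx.2.trans htb.le⟩
    rw [hcg]; ring_nf
  have hpt : pen t = 0 := hpen0 t le_rfl
  have hps : pen s = 0 := hpen0 s hst
  simp only [hh, hφ, hpt, hps, mul_zero, add_zero] at key
  have final : w t - w s ≤ G t - G s := by linarith
  rw [hGst, hsplit] at final
  linarith

/-- One-sided estimate up to the right endpoint. -/
lemma visc_key (a b : ℝ) (hab : a < b) (g w : ℝ → ℝ)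
    (hg : ContinuousOn g (Set.Icc a b)) (hgpos : ∀ t ∈ Set.Icc a b, 0 < g t)
    (hw : ContinuousOn w (Set.Icc a b))
    (hsub : ViscositySubsolution a b g w)
    (s t : ℝ) (has : a ≤ s) (hst : s ≤ t) (htb : t ≤ b) :
    w t - w s ≤ ∫ r in s..t, g r := by
  -- first for t < b
  have stepB : ∀ t', s ≤ t' → t' < b → w t' - w s ≤ ∫ r in s..t', g r := by
    intro t' hst' ht'b
    have : ∀ δ : ℝ, 0 < δ → w t' - w s ≤ (∫ r in s..t', g r) + δ := by
      intro δ hδ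
      have hε : 0 < δ / (t' - s + 1) := by
        apply div_pos hδ; linarith
      have hcore := visc_core a b hab g w hg hgpos hw hsub _ hε s t' has hst' ht'b
      have : δ / (t' - s + 1) * (t' - s) ≤ δ := by
        rw [div_mul_eq_mul_div, div_le_iff₀ (by linarith : (0:ℝ) < t' - s + 1)]
        nlinarith
      linarith
    linarith [le_of_forall_pos_le_add this]
  rcases lt_or_eq_of_le htb with htb' | heq
  · exact stepB t hst htb'
  · -- t = b : limit argument
    rw [heq] at hst ⊢
    rcases eq_or_lt_of_le hst with heq2 | hsb
    · rw [← heq2]; simp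
    -- clamped extension again for a continuous primitive
    set c : ℝ → ℝ := fun r => max a (min b r) with hc
    have hcl : Continuous c := by fun_prop
    have hmem : ∀ r, c r ∈ Icc a b := fun r =>
      ⟨le_max_left _ _, max_le hab.le (min_le_left _ _)⟩
    set G' : ℝ → ℝ := fun r => g (c r) with hG'
    have hgt : Continuous G' := hg.comp_continuous hcl hmem
    have geq : ∀ r ∈ Icc a b, G' r = g r := by
      intro r hr
      simp only [hG', hc]
      rw [min_eq_right hr.2, max_eq_right hr.1]
    set Q : ℝ → ℝ := fun r => ∫ x in s..r, G' x with hQ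
    have hQc : Continuous Q := by
      rw [continuous_iff_continuousAt]
      exact fun r => ((hgt.integral_hasStrictDerivAt s r).hasDerivAt).continuousAt
    have hcongr : ∀ t', s ≤ t' → t' ≤ b → Q t' = ∫ r in s..t', g r := by
      intro t' h1 h2
      apply intervalIntegral.integral_congr
      intro x hx
      rw [uIcc_of_le h1] at hx
      exact geq x ⟨has.trans hx.1, hx.2.trans h2⟩
    have hev : ∀ t' ∈ Ico s b, w t' ≤ w s + Q t' := by
      intro t' ht'
      have := stepB t' ht'.1 ht'.2
      rw [← hcongr t' ht'.1 ht'.2.le] at this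
      linarith
    haveI : (𝓝[Ico s b] b).NeBot := by
      rw [nhdsWithin_Ico_eq_nhdsLT hsb]
      infer_instance
    have hsubIcc : Ico s b ⊆ Icc a b := fun x hx => ⟨has.trans hx.1, hx.2.le⟩
    have h1 : Tendsto w (𝓝[Ico s b] b) (𝓝 (w b)) :=
      (hw b ⟨hab.le, le_refl b⟩).mono_left (nhdsWithin_mono b hsubIcc)
    have h2 : Tendsto (fun t' => w s + Q t') (𝓝[Ico s b] b) (𝓝 (w s + Q b)) :=
      ((continuous_const.add hQc).tendsto b).mono_left nhdsWithin_le_nhds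
    have h3 : w b ≤ w s + Q b := by
      apply le_of_tendsto_of_tendsto h1 h2
      filter_upwards [self_mem_nhdsWithin] with t' ht' using hev t' ht'
    rw [hcongr b hst le_rfl] at h3
    linarith

/-- Reflected one-sided estimate. -/
lemma visc_key2 (a b : ℝ) (hab : a < b) (g w : ℝ → ℝ)
    (hg : ContinuousOn g (Set.Icc a b)) (hgpos : ∀ t ∈ Set.Icc a b, 0 < g t)
    (hw : ContinuousOn w (Set.Icc a b))
    (hsub : ViscositySubsolution a b g w)
    (s t : ℝ) (has : a ≤ s) (hst : s ≤ t) (htb : t ≤ b) :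
    w s - w t ≤ ∫ r in s..t, g r := by
  set ρ : ℝ → ℝ := fun r => a + b - r with hρ
  have hρc : Continuous ρ := by fun_prop
  have hρmem : ∀ r ∈ Icc a b, ρ r ∈ Icc a b := by
    intro r hr
    exact ⟨by simp only [hρ]; linarith [hr.2], by simp only [hρ]; linarith [hr.1]⟩
  set g2 : ℝ → ℝ := fun r => g (ρ r) with hg2
  set w2 : ℝ → ℝ := fun r => w (ρ r) with hw2
  have hg2c : ContinuousOn g2 (Icc a b) :=
    hg.comp (hρc.continuousOn) (fun r hr => hρmem r hr)
  have hw2c : ContinuousOn w2 (Icc a b) :=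
    hw.comp (hρc.continuousOn) (fun r hr => hρmem r hr)
  have hg2pos : ∀ r ∈ Icc a b, 0 < g2 r := fun r hr => hgpos _ (hρmem r hr)
  have hsub2 : ViscositySubsolution a b g2 w2 := by
    intro t0 ht0 φ hφ hmax
    set t1 : ℝ := a + b - t0 with ht1
    have ht1ab : t1 ∈ Ioo a b := ⟨by simp only [ht1]; linarith [ht0.2],
      by simp only [ht1]; linarith [ht0.1]⟩
    set φ2 : ℝ → ℝ := fun r => φ (a + b - r) with hφ2
    have hinner : ∀ x : ℝ, HasDerivAt (fun r : ℝ => a + b - r) (-1) x := by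
      intro x
      simpa using (hasDerivAt_id x).const_sub (a + b)
    have hφ2d : Differentiable ℝ φ2 :=
      hφ.comp ((differentiable_const (a + b)).sub differentiable_id)
    have hd2 : HasDerivAt φ2 (deriv φ t0 * (-1)) t1 := by
      have houter : HasDerivAt φ (deriv φ (a + b - t1)) (a + b - t1) :=
        (hφ (a + b - t1)).hasDerivAt
      have := HasDerivAt.comp t1 houter (hinner t1)
      have harg : a + b - t1 = t0 := by simp only [ht1]; ring
      rw [harg] at this
      exact this
    -- transfer the local max
    have hmax2 : IsLocalMax (fun r => w r - φ2 r) t1 := by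
      have hρt : ρ t1 = t0 := by simp only [hρ, ht1]; ring
      have htend : Tendsto ρ (𝓝 t1) (𝓝 t0) := by
        have h := hρc.tendsto t1
        rwa [hρt] at h
      have hpull := htend.eventually hmax
      filter_upwards [hpull] with y hy
      simp only [hw2, hφ2, hρ] at hy ⊢
      have e2 : a + b - (a + b - y) = y := by ring
      rw [e2] at hy
      simp only [ht1]
      have e3 : a + b - (a + b - t0) = t0 := by ring
      rw [e3]
      exact hy
    have := hsub t1 ht1ab φ2 hφ2d hmax2
    rw [hd2.deriv] at this
    have habs : |deriv φ t0 * (-1)| = |deriv φ t0| := by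
      rw [abs_mul]; simp
    rw [habs] at this
    have : g t1 = g2 t0 := by simp only [hg2, hρ, ht1]
    linarith [this ▸ ‹|deriv φ t0| ≤ g t1›]
  have hres := visc_key a b hab g2 w2 hg2c hg2pos hw2c hsub2
    (a + b - t) (a + b - s) (by linarith) (by linarith) (by linarith)
  have e1 : w2 (a + b - s) = w s := by simp only [hw2, hρ]; ring_nf
  have e2 : w2 (a + b - t) = w t := by simp only [hw2, hρ]; ring_nf
  have e3 : (∫ r in (a + b - t)..(a + b - s), g2 r) = ∫ r in s..t, g r := by
    simp only [hg2, hρ]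
    rw [intervalIntegral.integral_comp_sub_left g (a + b)]
    norm_num
  rw [e1, e2, e3] at hres
  exact hres

theorem subsolution_lipschitz (a b : ℝ) (hab : a < b) (g w : ℝ → ℝ)
    (hg : ContinuousOn g (Set.Icc a b)) (hgpos : ∀ t ∈ Set.Icc a b, 0 < g t)
    (hw : ContinuousOn w (Set.Icc a b))
    (hsub : ViscositySubsolution a b g w) :
    (∀ s ∈ Set.Icc a b, ∀ t ∈ Set.Icc a b, |w t - w s| ≤ |∫ r in s..t, g r|) ∧
    (∀ s ∈ Set.Icc a b, ∀ t ∈ Set.Icc a b,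
      |w t - w s| ≤ (sSup (g '' Set.Icc a b)) * |t - s|) := by
  have both : ∀ s ∈ Icc a b, ∀ t ∈ Icc a b, s ≤ t →
      |w t - w s| ≤ ∫ r in s..t, g r := by
    intro s hs t ht hst
    have h1 := visc_key a b hab g w hg hgpos hw hsub s t hs.1 hst ht.2
    have h2 := visc_key2 a b hab g w hg hgpos hw hsub s t hs.1 hst ht.2
    exact abs_le.mpr ⟨by linarith, h1⟩
  have intnn : ∀ s ∈ Icc a b, ∀ t ∈ Icc a b, s ≤ t →
      0 ≤ ∫ r in s..t, g r := by
    intro s hs t ht hst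
    apply intervalIntegral.integral_nonneg hst
    intro x hx
    exact (hgpos x ⟨hs.1.trans hx.1, hx.2.trans ht.2⟩).le
  constructor
  · intro s hs t ht
    rcases le_total s t with hst | hts
    · rw [abs_of_nonneg (intnn s hs t ht hst)]
      exact both s hs t ht hst
    · rw [abs_sub_comm, intervalIntegral.integral_symm, abs_neg,
        abs_of_nonneg (intnn t ht s hs hts)]
      exact both t ht s hs hts
  · have hbdd : BddAbove (g '' Icc a b) :=
      (isCompact_Icc.image_of_continuousOn hg).bddAbove
    have hM : ∀ r ∈ Icc a b, g r ≤ sSup (g '' Icc a b) :=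
      fun r hr => le_csSup hbdd (mem_image_of_mem g hr)
    have step : ∀ s ∈ Icc a b, ∀ t ∈ Icc a b, s ≤ t →
        |w t - w s| ≤ sSup (g '' Icc a b) * (t - s) := by
      intro s hs t ht hst
      have h1 := both s hs t ht hst
      have h2 : (∫ r in s..t, g r) ≤ ∫ _ in s..t, sSup (g '' Icc a b) :=
        intervalIntegral.integral_mono_on hst
          ((hg.mono (Icc_subset_Icc hs.1 ht.2)).intervalIntegrable_of_Icc hst)
          intervalIntegrable_const
          (fun x hx => hM x ⟨hs.1.trans hx.1, hx.2.trans ht.2⟩)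
      rw [intervalIntegral.integral_const, smul_eq_mul] at h2
      calc |w t - w s| ≤ ∫ r in s..t, g r := h1
        _ ≤ (t - s) * sSup (g '' Icc a b) := h2
        _ = sSup (g '' Icc a b) * (t - s) := mul_comm _ _
    intro s hs t ht
    rcases le_total s t with hst | hts
    · rw [abs_of_nonneg (by linarith : (0:ℝ) ≤ t - s)]
      exact step s hs t ht hst
    · rw [abs_sub_comm, abs_of_nonpos (by linarith : t - s ≤ 0)]
      have := step t ht s hs hts
      have he : -(t - s) = s - t := by ring
      rw [he]
      exact this
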